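/- Let d ≥ 2, m ≥ 2 be integers and define g_m(x) = cot(π(x + 1/(2m))/d). Define α_n = (1/(2d)) tan(π/(2m)) [g_m(n) - g_m(⌊d/2⌋)] and β_n = (1/(2d)) tan(π/(2m)) [g_m(n+1-1/m) + g_m(⌊d/2⌋)] for n = 0,…,⌊d/2⌋-1. Then the sum S = Σ_{n=0}^{⌊d/2⌋-1} (α_n - β_n) equals (1/2){1 - tan(π/(2m))·cot[(π/d)(⌊d/2⌋ + 1/(2m))]}. -/

import Mathlib

open Finset in
lemma rootsum (d : ℕ) (hd : d ≠ 0) (w : ℂ) (hw : w ^ d ≠ 1) :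
    ∑ k ∈ range d, (1 - Complex.exp (2 * Real.pi * Complex.I / d) ^ k * w)⁻¹
      = d / (1 - w ^ d) := by
  set ζ := Complex.exp (2 * Real.pi * Complex.I / (d : ℂ)) with hζdef
  have hζ : IsPrimitiveRoot ζ d := Complex.isPrimitiveRoot_exp d hd
  have hwd : ∀ k : ℕ, (ζ ^ k * w) ^ d = w ^ d := fun k => by
    rw [mul_pow, ← pow_mul, mul_comm k d, pow_mul, hζ.pow_eq_one, one_pow, one_mul]
  have h1 : (1:ℂ) - w ^ d ≠ 0 := sub_ne_zero.mpr (Ne.symm hw)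
  have key : ∀ k ∈ range d, (1 - ζ ^ k * w)⁻¹
      = (∑ j ∈ range d, (ζ ^ k * w) ^ j) / (1 - w ^ d) := by
    intro k _
    have hx : (1:ℂ) - ζ ^ k * w ≠ 0 := by
      intro hc
      exact hw (by rw [← hwd k, show ζ ^ k * w = 1 by linear_combination -hc, one_pow])
    rw [inv_eq_one_div, div_eq_div_iff hx h1]
    have hgs := geom_sum_mul (ζ ^ k * w) d
    rw [hwd k] at hgs
    linear_combination hgs
  rw [Finset.sum_congr rfl key, ← Finset.sum_div]
  congr 1
  have : ∀ k ∈ range d, ∑ j ∈ range d, (ζ ^ k * w) ^ j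
      = ∑ j ∈ range d, (ζ ^ j) ^ k * w ^ j := by
    intro k _
    refine Finset.sum_congr rfl fun j _ => ?_
    rw [mul_pow, ← pow_mul, ← pow_mul, mul_comm k j]
  rw [Finset.sum_congr rfl this, Finset.sum_comm]
  rw [Finset.sum_eq_single 0]
  · simp [hd, Nat.pos_of_ne_zero]
  · intro j hj hj0
    have hjlt := Finset.mem_range.mp hj
    have hne1 : ζ ^ j ≠ 1 := hζ.pow_ne_one_of_pos_of_lt hj0 hjlt
    have : ∑ k ∈ range d, (ζ ^ j) ^ k = 0 := by
      rw [geom_sum_eq hne1, ← pow_mul, mul_comm j d, pow_mul, hζ.pow_eq_one, one_pow,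
        sub_self, zero_div]
    rw [← Finset.sum_mul, this, zero_mul]
  · intro h; simp at h; omega


lemma sin_zero_of_exp (t : ℂ) (h : Complex.exp (2 * Complex.I * t) = 1) :
    Complex.sin t = 0 := by
  have h2 : Complex.exp (t * Complex.I) * Complex.exp (t * Complex.I) = 1 := by
    rw [← Complex.exp_add, ← h]; ring_nf
  have h3 : Complex.exp (-(t * Complex.I)) = Complex.exp (t * Complex.I) := by
    rw [Complex.exp_neg]
    exact inv_eq_of_mul_eq_one_right h2
  rw [Complex.sin, neg_mul, h3, sub_self, zero_mul, zero_div]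

lemma cot_formula (t : ℂ) (h : 1 - Complex.exp (2 * Complex.I * t) ≠ 0) :
    Complex.cot t = Complex.I - 2 * Complex.I * (1 - Complex.exp (2 * Complex.I * t))⁻¹ := by
  rw [Complex.cot_eq_exp_ratio]
  have hI : Complex.I ≠ 0 := Complex.I_ne_zero
  field_simp
  linear_combination (1 + Complex.exp (2 * Complex.I * t)) * Complex.I_sq


open Finset in
lemma cot_sum_complex (d : ℕ) (hd : d ≠ 0) (z : ℂ) (h : Complex.sin (d * z) ≠ 0) :
    ∑ k ∈ range d, Complex.cot (z + k * Real.pi / d) = d * Complex.cot (d * z) := by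
  have hd0 : (d : ℂ) ≠ 0 := Nat.cast_ne_zero.2 hd
  set w := Complex.exp (2 * Complex.I * z) with hwdef
  set ζ := Complex.exp (2 * Real.pi * Complex.I / (d : ℂ)) with hζdef
  have hwd : w ^ d = Complex.exp (2 * Complex.I * ((d : ℂ) * z)) := by
    rw [← Complex.exp_nat_mul]; ring_nf
  have hw : w ^ d ≠ 1 := by
    rw [hwd]; intro hh
    exact h (sin_zero_of_exp _ hh)
  have hζpow : ∀ k : ℕ, ζ ^ k * w = Complex.exp (2 * Complex.I * (z + k * Real.pi / d)) := by
    intro k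
    rw [hζdef, hwdef, ← Complex.exp_nat_mul, ← Complex.exp_add]
    congr 1
    field_simp
    ring
  have hne : ∀ k : ℕ, (1 : ℂ) - ζ ^ k * w ≠ 0 := by
    intro k hc
    apply hw
    have h1 : ζ ^ k * w = 1 := by linear_combination -hc
    calc w ^ d = (ζ ^ k * w) ^ d := by
          rw [mul_pow, ← pow_mul, mul_comm k d, pow_mul,
            (Complex.isPrimitiveRoot_exp d hd).pow_eq_one, one_pow, one_mul]
      _ = 1 := by rw [h1, one_pow]
  have hterm : ∀ k ∈ range d, Complex.cot (z + k * Real.pi / d)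
      = Complex.I - 2 * Complex.I * (1 - ζ ^ k * w)⁻¹ := by
    intro k _
    rw [cot_formula _ (by rw [← hζpow k]; exact hne k), hζpow k]
  rw [Finset.sum_congr rfl hterm, Finset.sum_sub_distrib, Finset.sum_const, card_range,
    ← Finset.mul_sum, rootsum d hd w hw, cot_formula ((d : ℂ) * z) (by rw [← hwd]; exact sub_ne_zero.mpr (Ne.symm hw)), ← hwd]
  have h1 : (1 : ℂ) - w ^ d ≠ 0 := sub_ne_zero.mpr (Ne.symm hw)
  field_simp
  ring

open Finset in
lemma cot_sum_real (d : ℕ) (hd : d ≠ 0) (z : ℝ) (h : Real.sin (d * z) ≠ 0) :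
    ∑ k ∈ range d, Real.cot (z + k * Real.pi / d) = d * Real.cot (d * z) := by
  have hc : Complex.sin ((d : ℂ) * (z : ℂ)) ≠ 0 := by
    rw [show ((d : ℂ) * (z : ℂ)) = ((d * z : ℝ) : ℂ) by push_cast; ring, ← Complex.ofReal_sin]
    exact_mod_cast h
  have := cot_sum_complex d hd z hc
  apply Complex.ofReal_injective
  push_cast [Complex.ofReal_cot]
  exact this


lemma rcot_pi_sub (x : ℝ) : Real.cot (Real.pi - x) = - Real.cot x := by
  rw [Real.cot_eq_cos_div_sin, Real.cot_eq_cos_div_sin, Real.cos_pi_sub, Real.sin_pi_sub,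
    neg_div]

lemma even_reflect (G : ℕ → ℝ) (k : ℕ) :
    ∑ n ∈ Finset.range k, (G n + G (2*k - 1 - n)) = ∑ n ∈ Finset.range (2*k), G n := by
  rw [Finset.sum_add_distrib]
  have h2 : ∑ n ∈ Finset.range k, G (2*k - 1 - n) = ∑ j ∈ Finset.range k, G (k + j) := by
    rw [← Finset.sum_range_reflect (fun j => G (k + j)) k]
    refine Finset.sum_congr rfl fun n hn => ?_
    have := Finset.mem_range.mp hn
    congr 1
    omega
  rw [h2, Finset.range_eq_Ico, Finset.range_eq_Ico,
    ← Finset.sum_Ico_consecutive G (Nat.zero_le k) (by omega : k ≤ 2*k),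
    Finset.sum_Ico_eq_sum_range, Finset.sum_Ico_eq_sum_range]
  simp only [Nat.sub_zero, Nat.zero_add, zero_add]
  rw [Finset.sum_Ico_eq_sum_range]
  simp [show 2*k - k = k by omega]

lemma odd_reflect (G : ℕ → ℝ) (k : ℕ) :
    ∑ n ∈ Finset.range k, (G n + G (2*k - n))
      = (∑ n ∈ Finset.range (2*k+1), G n) - G k := by
  rw [Finset.sum_add_distrib]
  have h2 : ∑ n ∈ Finset.range k, G (2*k - n) = ∑ j ∈ Finset.range k, G (k + (j+1)) := by
    rw [← Finset.sum_range_reflect (fun j => G (k + (j+1))) k]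
    refine Finset.sum_congr rfl fun n hn => ?_
    have := Finset.mem_range.mp hn
    congr 1
    omega
  have h3 : ∑ n ∈ Finset.range (2*k+1), G n
      = (∑ n ∈ Finset.range k, G n) + ∑ j ∈ Finset.range (k+1), G (k + j) := by
    rw [Finset.range_eq_Ico,
      ← Finset.sum_Ico_consecutive G (Nat.zero_le k) (by omega : k ≤ 2*k+1),
      Finset.sum_Ico_eq_sum_range, Finset.sum_Ico_eq_sum_range]
    simp [show 2*k+1-k = k+1 by omega]
  rw [h2, h3, Finset.sum_range_succ' (fun j => G (k + j)) k]
  simp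
  ring






theorem stmt1 (d m : ℕ) (hd : 2 ≤ d) (hm : 2 ≤ m)
    (g : ℝ → ℝ) (hg : ∀ x : ℝ, g x = Real.cot (Real.pi * (x + 1 / (2 * m)) / d))
    (α β : ℕ → ℝ)
    (hα : ∀ n : ℕ, α n = 1 / (2 * d) * Real.tan (Real.pi / (2 * m))
      * (g n - g ((d / 2 : ℕ) : ℝ)))
    (hβ : ∀ n : ℕ, β n = 1 / (2 * d) * Real.tan (Real.pi / (2 * m))
      * (g ((n : ℝ) + 1 - 1 / m) + g ((d / 2 : ℕ) : ℝ))) :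
    ∑ n ∈ Finset.range (d / 2), (α n - β n)
      = 1 / 2 * (1 - Real.tan (Real.pi / (2 * m))
          * Real.cot (Real.pi / d * (((d / 2 : ℕ) : ℝ) + 1 / (2 * m)))) := by
  have hd0 : (d : ℝ) ≠ 0 := by positivity
  have hdr2 : (2:ℝ) ≤ (d:ℝ) := by exact_mod_cast hd
  have hmr : (2:ℝ) ≤ (m:ℝ) := by exact_mod_cast hm
  have hm0 : (0:ℝ) < (m:ℝ) := by linarith
  have hpi := Real.pi_pos
  have hangle1 : 0 < Real.pi / (2*m) := by positivity
  have hangle2 : Real.pi / (2*m) < Real.pi / 2 := by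
    apply div_lt_div_of_pos_left hpi two_pos
    linarith
  have hsin : Real.sin (Real.pi / (2*m)) ≠ 0 :=
    ne_of_gt (Real.sin_pos_of_pos_of_lt_pi hangle1 (by linarith))
  have hcos : Real.cos (Real.pi / (2*m)) ≠ 0 :=
    ne_of_gt (Real.cos_pos_of_mem_Ioo ⟨by linarith, hangle2⟩)
  have htc : Real.tan (Real.pi/(2*m)) * Real.cot (Real.pi/(2*m)) = 1 := by
    rw [Real.tan_eq_sin_div_cos, Real.cot_eq_cos_div_sin]
    field_simp
  set T := Real.tan (Real.pi/(2*m)) with hT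
  set z : ℝ := Real.pi / (2*m) / d with hz
  have hdz : (d:ℝ) * z = Real.pi/(2*m) := by
    rw [hz]; field_simp
  have hGsum : ∑ k ∈ Finset.range d, g ((k : ℕ) : ℝ) = d * Real.cot (Real.pi/(2*m)) := by
    rw [← hdz, ← cot_sum_real d (by omega) z (by rw [hdz]; exact hsin)]
    refine Finset.sum_congr rfl fun k _ => ?_
    rw [hg]
    congr 1
    rw [hz]
    field_simp
    ring
  have hgK : Real.cot (Real.pi / d * (((d/2 : ℕ):ℝ) + 1/(2*m))) = g ((d/2 : ℕ):ℝ) := by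
    rw [hg]
    congr 1
    ring
  set gK := g ((d/2 : ℕ):ℝ) with hgKdef
  have hrefl : ∀ n ∈ Finset.range (d/2), g ((n:ℝ) + 1 - 1/m) = - g ((d - 1 - n : ℕ) : ℝ) := by
    intro n hn
    have hn' : n < d/2 := Finset.mem_range.mp hn
    have hcast : ((d - 1 - n : ℕ) : ℝ) = (d:ℝ) - 1 - n := by
      have h1 : d - 1 - n = d - (n+1) := by omega
      rw [h1, Nat.cast_sub (by omega)]
      push_cast
      ring
    rw [hg, hg, hcast, show Real.pi * ((d:ℝ) - 1 - n + 1/(2*m)) / d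
        = Real.pi - Real.pi * (((n:ℝ) + 1 - 1/m) + 1/(2*m)) / d by field_simp; ring,
      rcot_pi_sub, neg_neg]
  have hsum1 : ∑ n ∈ Finset.range (d/2), (α n - β n)
      = 1/(2*d) * T * (∑ n ∈ Finset.range (d/2), (g (n:ℝ) + g ((d - 1 - n : ℕ):ℝ)))
        - (d/2 : ℕ) * (2 * (1/(2*d) * T) * gK) := by
    have hterm : ∀ n ∈ Finset.range (d/2), α n - β n
        = 1/(2*d) * T * (g (n:ℝ) + g ((d - 1 - n : ℕ):ℝ)) - 2 * (1/(2*d) * T) * gK := by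
      intro n hn
      rw [hα, hβ, hrefl n hn]
      ring
    rw [Finset.sum_congr rfl hterm, Finset.sum_sub_distrib, Finset.sum_const,
      Finset.card_range, ← Finset.mul_sum, nsmul_eq_mul]
  rcases Nat.even_or_odd d with ⟨k, hk⟩ | ⟨k, hk⟩
  · have hK : d / 2 = k := by omega
    have hdk : (d:ℝ) = 2*k := by rw [hk]; push_cast; ring
    have e1 : ∑ n ∈ Finset.range (d/2), (g (n:ℝ) + g ((d - 1 - n : ℕ):ℝ))
        = ∑ n ∈ Finset.range d, g ((n:ℕ):ℝ) := by
      rw [hK, show d = 2*k by omega]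
      rw [← even_reflect (fun j => g (j:ℝ)) k]
    rw [hsum1, e1, hGsum, hgK]
    have hKr : ((d/2 : ℕ):ℝ) = (k:ℝ) := by rw [hK]
    have hk0 : (k:ℝ) ≠ 0 := by
      intro h0
      rw [hdk, h0, mul_zero] at hd0
      exact hd0 rfl
    rw [hKr, hdk]
    field_simp
    linear_combination htc
  · have hK : d / 2 = k := by omega
    have hdk : (d:ℝ) = 2*k+1 := by rw [hk]; push_cast; ring
    have e1 : ∑ n ∈ Finset.range (d/2), (g (n:ℝ) + g ((d - 1 - n : ℕ):ℝ))
        = (∑ n ∈ Finset.range d, g ((n:ℕ):ℝ)) - gK := by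
      rw [hK, show d = 2*k+1 by omega, hgKdef, show ((d/2 : ℕ):ℝ) = ((k:ℕ):ℝ) by rw [hK]]
      rw [← odd_reflect (fun j => g (j:ℝ)) k]
      refine Finset.sum_congr rfl fun n hn => ?_
      congr 3 <;> omega
    rw [hsum1, e1, hGsum, hgK]
    have hKr : ((d/2 : ℕ):ℝ) = (k:ℝ) := by rw [hK]
    rw [hKr, hdk]
    have h2k1 : (2*(k:ℝ)+1) ≠ 0 := by positivity
    field_simp
    linear_combination (2*(k:ℝ)+1) * htc
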